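/- Let K_q be uniformly distributed on {1,…,q}. Then the law of √q·â^q_{K_q}/‖â^q‖ converges weakly, as q → ∞, to the point mass at 0. In particular these laws do not converge to the standard normal distribution N(0,1), so the sequence of maximal configurations ŷ^q := √(q(q²−1)/12)·â^q/‖â^q‖ fails the necessary condition for asymptotic permutation-uniformity and hence is not asymptotically permutation-uniform. -/

import Mathlib

open MeasureTheory Filter

/-- `b_k^q = √(3k(q-k)/(q(q+1)))`. -/
noncomputable def bcoef (q k : ℕ) : ℝ :=
  Real.sqrt (3 * k * ((q : ℝ) - k) / (q * ((q : ℝ) + 1)))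

/-- The vector `â^q ∈ ℝ^q` with `â_k^q = b_{k-1}^q - b_k^q`, `k = 1,…,q`. -/
noncomputable def ahat (q : ℕ) : EuclideanSpace ℝ (Fin q) := WithLp.toLp 2 (fun i : Fin q =>
  bcoef q (i : ℕ) - bcoef q ((i : ℕ) + 1))

open Finset

lemma bcoef_small (q k : ℕ) (hq : q ≤ 1) : bcoef q k = 0 := by
  interval_cases q
  · unfold bcoef; norm_num
  · unfold bcoef
    apply Real.sqrt_eq_zero'.mpr
    rcases Nat.eq_zero_or_pos k with h | h
    · subst h; norm_num
    · have hk : (1:ℝ) ≤ k := by exact_mod_cast h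
      apply div_nonpos_of_nonpos_of_nonneg
      · push_cast
        nlinarith [Nat.cast_nonneg (α := ℝ) k]
      · norm_num

lemma bcoef_nonneg (q k : ℕ) : 0 ≤ bcoef q k := Real.sqrt_nonneg _

lemma bcoef_sq (q k : ℕ) (hq : 1 ≤ q) (hk : k ≤ q) :
    bcoef q k ^ 2 = 3 * k * ((q : ℝ) - k) / (q * ((q : ℝ) + 1)) := by
  apply Real.sq_sqrt
  have h1 : (k : ℝ) ≤ q := Nat.cast_le.mpr hk
  have h2 : (0:ℝ) < q := by exact_mod_cast hq
  apply div_nonneg (mul_nonneg (by positivity) (sub_nonneg.mpr h1)) (by positivity)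

lemma bcoef_sq_le (q k : ℕ) (hq : 1 ≤ q) (hk : k ≤ q) :
    bcoef q k ^ 2 ≤ 3 * ((q : ℝ) - k) / q := by
  rw [bcoef_sq q k hq hk]
  have h1 : (k : ℝ) ≤ q := Nat.cast_le.mpr hk
  have h2 : (0:ℝ) < q := by exact_mod_cast hq
  rw [div_le_div_iff₀ (by positivity) h2]
  nlinarith [sq_nonneg ((q:ℝ) - k)]

lemma bcoef_sq_sub (q k : ℕ) (hq : 1 ≤ q) (hk : k + 1 ≤ q) :
    bcoef q k ^ 2 - bcoef q (k+1) ^ 2 = 3 * (2 * (k:ℝ) + 1 - q) / (q * ((q : ℝ) + 1)) := by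
  rw [bcoef_sq q k hq (le_trans (Nat.le_succ k) hk), bcoef_sq q (k+1) hq hk]
  have h2 : (0:ℝ) < q := by exact_mod_cast hq
  push_cast
  field_simp
  ring

/-- lower bound on (b_k + b_{k+1})^2 -/
lemma sum_sq_ge (q k : ℕ) (hq : 2 ≤ q) (hk : k < q) :
    3 * ((min (k+1) (q-k) : ℕ) : ℝ) / (8*q) ≤ (bcoef q k + bcoef q (k+1))^2 := by
  have hq1 : 1 ≤ q := by omega
  have hqR : (2:ℝ) ≤ q := by exact_mod_cast hq
  have hkR : (k:ℝ) < q := by exact_mod_cast hk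
  by_cases hcase : 2*k+1 ≤ q
  · have hmin : min (k+1) (q-k) = k+1 := by omega
    rw [hmin]
    have hc := bcoef_sq q (k+1) hq1 hk
    have hcaseR : 2*(k:ℝ)+1 ≤ q := by exact_mod_cast hcase
    have key : 3 * ((k+1 : ℕ) : ℝ) / (8*q) ≤ bcoef q (k+1)^2 := by
      rw [hc]
      push_cast
      rw [div_le_div_iff₀ (by positivity) (by positivity)]
      have h8 : (q:ℝ)+1 ≤ 8*((q:ℝ)-((k:ℝ)+1)) := by linarith
      nlinarith [mul_le_mul_of_nonneg_left h8
        (show (0:ℝ) ≤ 3*((k:ℝ)+1)*q by positivity)]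
    nlinarith [bcoef_nonneg q k, bcoef_nonneg q (k+1), sq_nonneg (bcoef q k)]
  · have hmin : min (k+1) (q-k) = q - k := by omega
    rw [hmin]
    have ha := bcoef_sq q k hq1 (le_of_lt hk)
    have hcaseR : (q:ℝ) ≤ 2*(k:ℝ)+1 := by
      have : q ≤ 2*k+1 := by omega
      exact_mod_cast this
    have hsub : ((q - k : ℕ) : ℝ) = (q:ℝ) - k := by
      rw [Nat.cast_sub (le_of_lt hk)]
    have key : 3 * ((q-k : ℕ) : ℝ) / (8*q) ≤ bcoef q k^2 := by
      rw [ha, hsub]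
      rw [div_le_div_iff₀ (by positivity) (by positivity)]
      have h8 : (q:ℝ)+1 ≤ 8*(k:ℝ) := by linarith
      nlinarith [mul_le_mul_of_nonneg_left h8
        (show (0:ℝ) ≤ 3*((q:ℝ)-(k:ℝ))*q by nlinarith)]
    nlinarith [bcoef_nonneg q k, bcoef_nonneg q (k+1), sq_nonneg (bcoef q (k+1))]

/-- per-coordinate square bound -/
lemma ahat_sq_le (q k : ℕ) (hq : 2 ≤ q) (hk : k < q) :
    (bcoef q k - bcoef q (k+1))^2 ≤ 24 / (q * ((min (k+1) (q-k) : ℕ) : ℝ)) := by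
  have hq1 : 1 ≤ q := by omega
  have hqR : (2:ℝ) ≤ q := by exact_mod_cast hq
  have hqpos : (0:ℝ) < q := by linarith
  set m : ℕ := min (k+1) (q-k) with hm
  have hm1 : 1 ≤ m := by omega
  have hmR : (1:ℝ) ≤ (m:ℝ) := by exact_mod_cast hm1
  set a := bcoef q k
  set c := bcoef q (k+1)
  have hprod : ((a - c) * (a + c))^2 = (a^2 - c^2)^2 := by ring_nf
  have hD := bcoef_sq_sub q k hq1 hk
  have hDabs : (a^2 - c^2)^2 ≤ 9 / q^2 := by
    rw [hD]
    have h1 : (0:ℝ) ≤ k := Nat.cast_nonneg k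
    have h2 : (k:ℝ) + 1 ≤ q := by exact_mod_cast hk
    rw [div_pow, div_le_div_iff₀ (by positivity) (by positivity)]
    have habs : (2*(k:ℝ)+1-q)^2 ≤ ((q:ℝ)+1)^2 := by nlinarith
    nlinarith [mul_le_mul_of_nonneg_right habs (sq_nonneg (q:ℝ))]
  have hL := sum_sq_ge q k hq hk
  have hLpos : (0:ℝ) < 3 * (m:ℝ) / (8*q) := by positivity
  have hs2 : (a - c)^2 * (a+c)^2 = (a^2-c^2)^2 := by ring
  have step : (a-c)^2 * (3 * (m:ℝ) / (8*q)) ≤ 9 / q^2 := by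
    calc (a-c)^2 * (3 * (m:ℝ) / (8*q)) ≤ (a-c)^2 * (a+c)^2 :=
          mul_le_mul_of_nonneg_left hL (sq_nonneg _)
    _ = (a^2-c^2)^2 := hs2
    _ ≤ 9 / q^2 := hDabs
  rw [le_div_iff₀ (by positivity)]
  have step2 := mul_le_mul_of_nonneg_right step
    (le_of_lt (by positivity : (0:ℝ) < 8*(q:ℝ)^3))
  have e1 : (a-c)^2 * (3*(m:ℝ)/(8*(q:ℝ))) * (8*(q:ℝ)^3) = (a-c)^2*3*(m:ℝ)*(q:ℝ)^2 := by
    field_simp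
  have e2 : 9/(q:ℝ)^2 * (8*(q:ℝ)^3) = 72*(q:ℝ) := by field_simp; ring
  have key : (a-c)^2*3*(m:ℝ)*(q:ℝ)^2 ≤ 72*(q:ℝ) := by rw [← e1, ← e2]; exact step2
  refine le_of_mul_le_mul_right ?_ (show (0:ℝ) < 3*(q:ℝ) by positivity)
  calc (a-c)^2*((q:ℝ)*(m:ℝ))*(3*(q:ℝ)) = (a-c)^2*3*(m:ℝ)*(q:ℝ)^2 := by ring
    _ ≤ 72*(q:ℝ) := key
    _ = 24*(3*(q:ℝ)) := by ring

lemma one_div_sqrt_succ (k : ℕ) :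
    1 / Real.sqrt ((k:ℝ)+1) ≤ 2 * (Real.sqrt ((k:ℝ)+1) - Real.sqrt (k:ℝ)) := by
  have ha : Real.sqrt ((k:ℝ)+1) ^ 2 = (k:ℝ)+1 := Real.sq_sqrt (by positivity)
  have hb : Real.sqrt (k:ℝ) ^ 2 = (k:ℝ) := Real.sq_sqrt (by positivity)
  have hab : Real.sqrt (k:ℝ) ≤ Real.sqrt ((k:ℝ)+1) := Real.sqrt_le_sqrt (by linarith)
  have hb0 : 0 ≤ Real.sqrt (k:ℝ) := Real.sqrt_nonneg _
  have ha0 : 0 < Real.sqrt ((k:ℝ)+1) := Real.sqrt_pos.mpr (by positivity)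
  rw [div_le_iff₀ ha0]
  nlinarith [sq_nonneg (Real.sqrt ((k:ℝ)+1) - Real.sqrt (k:ℝ))]

lemma sum_one_div_sqrt (q : ℕ) :
    ∑ k ∈ range q, 1 / Real.sqrt ((k:ℝ)+1) ≤ 2 * Real.sqrt q := by
  calc ∑ k ∈ range q, 1 / Real.sqrt ((k:ℝ)+1)
      ≤ ∑ k ∈ range q, (2 * Real.sqrt (((k+1:ℕ)):ℝ) - 2 * Real.sqrt ((k:ℕ):ℝ)) := by
        apply Finset.sum_le_sum
        intro k _
        have h := one_div_sqrt_succ k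
        have hc : ((k+1 : ℕ) : ℝ) = (k:ℝ)+1 := by push_cast; ring
        rw [hc]
        linarith
    _ = 2 * Real.sqrt q - 2 * Real.sqrt ((0:ℕ):ℝ) :=
        Finset.sum_range_sub (fun n : ℕ => 2 * Real.sqrt (n:ℝ)) q
    _ = 2 * Real.sqrt q := by simp

lemma sum_one_div_sqrt' (q : ℕ) :
    ∑ k ∈ range q, 1 / Real.sqrt (((q-k:ℕ)):ℝ) ≤ 2 * Real.sqrt q := by
  have h := Finset.sum_range_reflect (fun j => 1 / Real.sqrt ((j:ℝ)+1)) q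
  calc ∑ k ∈ range q, 1 / Real.sqrt (((q-k:ℕ)):ℝ)
      = ∑ j ∈ range q, 1 / Real.sqrt (((q-1-j:ℕ):ℝ)+1) := by
        apply Finset.sum_congr rfl
        intro k hk
        have hk' : k < q := Finset.mem_range.mp hk
        have : (q - k : ℕ) = (q - 1 - k) + 1 := by omega
        rw [this]
        push_cast
        ring_nf
    _ = ∑ k ∈ range q, 1 / Real.sqrt ((k:ℝ)+1) := h
    _ ≤ 2 * Real.sqrt q := sum_one_div_sqrt q

lemma ahat_l1 (q : ℕ) : ∑ i : Fin q, |ahat q i| ≤ 20 := by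
  by_cases hq : 2 ≤ q
  case neg =>
    interval_cases q <;> simp [ahat, bcoef_small]
  have hqR : (2:ℝ) ≤ q := by exact_mod_cast hq
  have hs : (0:ℝ) < Real.sqrt q := Real.sqrt_pos.mpr (by linarith)
  set c : ℝ := Real.sqrt 24 with hc
  have hc0 : 0 ≤ c := Real.sqrt_nonneg _
  have hsum : ∑ i : Fin q, |ahat q i|
      = ∑ k ∈ range q, |bcoef q k - bcoef q (k+1)| := by
    rw [← Fin.sum_univ_eq_sum_range (fun k => |bcoef q k - bcoef q (k+1)|) q]
    rfl
  rw [hsum]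
  have hterm : ∀ k ∈ range q, |bcoef q k - bcoef q (k+1)|
      ≤ c / Real.sqrt q * (1 / Real.sqrt ((k:ℝ)+1) + 1 / Real.sqrt (((q-k:ℕ)):ℝ)) := by
    intro k hk
    have hkq : k < q := Finset.mem_range.mp hk
    set m : ℕ := min (k+1) (q-k) with hm
    have hm1 : 1 ≤ m := by omega
    have hmR : (0:ℝ) < (m:ℝ) := by exact_mod_cast hm1
    have h1 : |bcoef q k - bcoef q (k+1)| ≤ Real.sqrt (24 / ((q:ℝ) * (m:ℝ))) := by
      rw [← Real.sqrt_sq_eq_abs]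
      exact Real.sqrt_le_sqrt (ahat_sq_le q k hq hkq)
    have h2 : Real.sqrt (24 / ((q:ℝ) * (m:ℝ)))
        = c / Real.sqrt q * (1 / Real.sqrt (m:ℝ)) := by
      rw [Real.sqrt_div (by norm_num : (0:ℝ) ≤ 24),
        Real.sqrt_mul (by positivity : (0:ℝ) ≤ (q:ℝ))]
      field_simp
      exact hc.symm
    have h3 : 1 / Real.sqrt (m:ℝ)
        ≤ 1 / Real.sqrt ((k:ℝ)+1) + 1 / Real.sqrt (((q-k:ℕ)):ℝ) := by
      rcases le_total (k+1) (q-k) with hle | hle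
      · have : m = k + 1 := by omega
        rw [this]
        push_cast
        have : (0:ℝ) ≤ 1 / Real.sqrt (((q-k:ℕ)):ℝ) := by positivity
        linarith
      · have : m = q - k := by omega
        rw [this]
        have : (0:ℝ) ≤ 1 / Real.sqrt ((k:ℝ)+1) := by positivity
        linarith
    calc |bcoef q k - bcoef q (k+1)| ≤ Real.sqrt (24 / ((q:ℝ) * (m:ℝ))) := h1
      _ = c / Real.sqrt q * (1 / Real.sqrt (m:ℝ)) := h2
      _ ≤ c / Real.sqrt q * (1 / Real.sqrt ((k:ℝ)+1) + 1 / Real.sqrt (((q-k:ℕ)):ℝ)) :=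
          mul_le_mul_of_nonneg_left h3 (by positivity)
  calc ∑ k ∈ range q, |bcoef q k - bcoef q (k+1)|
      ≤ ∑ k ∈ range q, c / Real.sqrt q *
          (1 / Real.sqrt ((k:ℝ)+1) + 1 / Real.sqrt (((q-k:ℕ)):ℝ)) :=
        Finset.sum_le_sum hterm
    _ = c / Real.sqrt q * ((∑ k ∈ range q, 1 / Real.sqrt ((k:ℝ)+1))
          + ∑ k ∈ range q, 1 / Real.sqrt (((q-k:ℕ)):ℝ)) := by
        rw [← Finset.mul_sum, Finset.sum_add_distrib]
    _ ≤ c / Real.sqrt q * (2 * Real.sqrt q + 2 * Real.sqrt q) := by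
        apply mul_le_mul_of_nonneg_left (add_le_add (sum_one_div_sqrt q) (sum_one_div_sqrt' q))
        positivity
    _ = 4 * c := by field_simp; ring
    _ ≤ 20 := by
        have h24 : c ^ 2 = 24 := Real.sq_sqrt (by norm_num)
        nlinarith

lemma ahat_term_lower (q j : ℕ) (hq : 8 ≤ q) (hj : j < q/8) :
    3*(q:ℝ)/(16*((q:ℝ)+1)^2*((j:ℝ)+1)) ≤ (bcoef q (q-1-j) - bcoef q (q-1-j+1))^2 := by
  have hq1 : 1 ≤ q := by omega
  have hj8 : 8*(j+1) ≤ q := by omega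
  set k := q - 1 - j with hkdef
  have hk1 : 1 ≤ k := by omega
  have hkq : k + 1 ≤ q := by omega
  have hqR : (8:ℝ) ≤ q := by exact_mod_cast hq
  have hj8R : 8*((j:ℝ)+1) ≤ q := by exact_mod_cast hj8
  have hkR : (k:ℝ) = (q:ℝ) - 1 - (j:ℝ) := by
    have h : k + (j+1) = q := by omega
    have := congrArg (fun n : ℕ => (n:ℝ)) h
    push_cast at this
    linarith
  have hk1R : (1:ℝ) ≤ k := by exact_mod_cast hk1
  set a := bcoef q k with ha
  set c := bcoef q (k+1) with hc
  have hD : a^2 - c^2 = 3 * (2 * (k:ℝ) + 1 - q) / (q * ((q : ℝ) + 1)) :=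
    bcoef_sq_sub q k hq1 hkq
  -- lower bound on D
  have h2k : (q:ℝ)/2 ≤ 2*(k:ℝ)+1-q := by rw [hkR]; linarith
  have hDlow : 3/(2*((q:ℝ)+1)) ≤ a^2 - c^2 := by
    rw [hD, div_le_div_iff₀ (by positivity) (by positivity)]
    nlinarith [mul_le_mul_of_nonneg_right h2k (show (0:ℝ) ≤ 6*((q:ℝ)+1) by positivity)]
  -- upper bound on s^2
  have hqk : (q:ℝ) - (k:ℝ) = (j:ℝ) + 1 := by rw [hkR]; ring
  have hqk1 : (q:ℝ) - ((k+1:ℕ):ℝ) = (j:ℝ) := by push_cast; rw [hkR]; ring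
  have haU : a^2 ≤ 3*((j:ℝ)+1)/q := by
    have := bcoef_sq_le q k hq1 (by omega)
    rwa [hqk] at this
  have hcU : c^2 ≤ 3*(j:ℝ)/q := by
    have := bcoef_sq_le q (k+1) hq1 hkq
    rwa [hqk1] at this
  have hsU : (a+c)^2 ≤ 12*((j:ℝ)+1)/q := by
    have hj0 : (0:ℝ) ≤ j := Nat.cast_nonneg j
    have hq0R : (0:ℝ) < q := by linarith
    have h2 : (a+c)^2 ≤ 2*a^2+2*c^2 := by nlinarith [sq_nonneg (a-c)]
    have haU' : a^2 * (q:ℝ) ≤ 3*((j:ℝ)+1) := (le_div_iff₀ hq0R).mp haU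
    have hcU' : c^2 * (q:ℝ) ≤ 3*(j:ℝ) := (le_div_iff₀ hq0R).mp hcU
    have h3 : 2*a^2+2*c^2 ≤ 12*((j:ℝ)+1)/q := by
      rw [le_div_iff₀ hq0R]
      nlinarith
    linarith
  -- positivity of s
  have hapos : 0 < a := by
    have hsq := bcoef_sq q k hq1 (by omega)
    have : 0 < a^2 := by
      rw [hsq, hqk]
      positivity
    cases' (lt_or_eq_of_le (bcoef_nonneg q k)) with h h
    · exact h
    · exfalso; rw [ha, ← h] at this; simp at this
  have hspos : 0 < a + c := by have := bcoef_nonneg q (k+1); linarith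
  -- conclude
  have hUpos : (0:ℝ) < 12*((j:ℝ)+1)/q := by positivity
  refine le_of_mul_le_mul_right ?_ hUpos
  have hds : (a-c)^2 * ((a+c))^2 = (a^2-c^2)^2 := by ring
  have hDlow0 : (0:ℝ) ≤ 3/(2*((q:ℝ)+1)) := by positivity
  calc 3*(q:ℝ)/(16*((q:ℝ)+1)^2*((j:ℝ)+1)) * (12*((j:ℝ)+1)/q)
      = (3/(2*((q:ℝ)+1)))^2 := by field_simp; ring
    _ ≤ (a^2-c^2)^2 := pow_le_pow_left₀ hDlow0 hDlow 2
    _ = (a-c)^2 * (a+c)^2 := hds.symm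
    _ ≤ (a-c)^2 * (12*((j:ℝ)+1)/q) := by
        exact mul_le_mul_of_nonneg_left hsU (sq_nonneg _)

lemma norm_sq_lower (q : ℕ) (hq : 8 ≤ q) :
    3/64 * ∑ j ∈ range (q/8), 1/((j:ℝ)+1)
      ≤ (q:ℝ) * ∑ i : Fin q, (ahat q i)^2 := by
  have hq1 : 1 ≤ q := by omega
  have hqR : (8:ℝ) ≤ q := by exact_mod_cast hq
  set F : ℕ → ℝ := fun k => (bcoef q k - bcoef q (k+1))^2 with hF
  have hsum : ∑ i : Fin q, (ahat q i)^2 = ∑ k ∈ range q, F k := by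
    rw [← Fin.sum_univ_eq_sum_range F q]
    rfl
  have hinj : ∀ x ∈ range (q/8), ∀ y ∈ range (q/8),
      q - 1 - x = q - 1 - y → x = y := by
    intro x hx y hy hxy
    have hx' := Finset.mem_range.mp hx
    have hy' := Finset.mem_range.mp hy
    omega
  have himage : (range (q/8)).image (fun j => q - 1 - j) ⊆ range q := by
    intro x hx
    obtain ⟨j, hj, rfl⟩ := Finset.mem_image.mp hx
    have := Finset.mem_range.mp hj
    exact Finset.mem_range.mpr (by omega)
  have h1 : ∑ j ∈ range (q/8), F (q - 1 - j) ≤ ∑ k ∈ range q, F k := by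
    rw [← Finset.sum_image hinj]
    exact Finset.sum_le_sum_of_subset_of_nonneg himage (fun i _ _ => sq_nonneg _)
  calc 3/64 * ∑ j ∈ range (q/8), 1/((j:ℝ)+1)
      = ∑ j ∈ range (q/8), 3/64 * (1/((j:ℝ)+1)) := Finset.mul_sum _ _ _
    _ ≤ ∑ j ∈ range (q/8), (q:ℝ) * (3*(q:ℝ)/(16*((q:ℝ)+1)^2*((j:ℝ)+1))) := by
        apply Finset.sum_le_sum
        intro j _
        have hj0 : (0:ℝ) ≤ j := Nat.cast_nonneg j
        have e1 : (q:ℝ) * (3*(q:ℝ)/(16*((q:ℝ)+1)^2*((j:ℝ)+1)))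
            = 3*(q:ℝ)^2/(16*((q:ℝ)+1)^2*((j:ℝ)+1)) := by ring
        have e2 : (3:ℝ)/64 * (1/((j:ℝ)+1)) = 3/(64*((j:ℝ)+1)) := by rw [div_mul_div_comm, mul_one]
        rw [e1, e2, div_le_div_iff₀ (by positivity) (by positivity)]
        nlinarith [mul_le_mul_of_nonneg_right
          (show 16*((q:ℝ)+1)^2 ≤ 64*(q:ℝ)^2 by nlinarith)
          (show (0:ℝ) ≤ 3*((j:ℝ)+1) by positivity)]
    _ ≤ ∑ j ∈ range (q/8), (q:ℝ) * F (q - 1 - j) := by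
        apply Finset.sum_le_sum
        intro j hj
        exact mul_le_mul_of_nonneg_left
          (ahat_term_lower q j hq (Finset.mem_range.mp hj)) (by positivity)
    _ = (q:ℝ) * ∑ j ∈ range (q/8), F (q - 1 - j) := (Finset.mul_sum _ _ _).symm
    _ ≤ (q:ℝ) * ∑ k ∈ range q, F k := mul_le_mul_of_nonneg_left h1 (by positivity)
    _ = (q:ℝ) * ∑ i : Fin q, (ahat q i)^2 := by rw [hsum]

lemma T_tendsto : Tendsto (fun q : ℕ => (q:ℝ) * ∑ i : Fin q, (ahat q i)^2)
    atTop atTop := by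
  have h8 : Tendsto (fun q : ℕ => q/8) atTop atTop :=
    tendsto_atTop_atTop.mpr fun b => ⟨8*b+8, fun q hq => by omega⟩
  have hH := Real.tendsto_sum_range_one_div_nat_succ_atTop
  have hcomp : Tendsto (fun q : ℕ => ∑ i ∈ range (q/8), (1/((i:ℝ)+1))) atTop atTop :=
    hH.comp h8
  have hmul : Tendsto (fun q : ℕ => (3/64 : ℝ) * ∑ i ∈ range (q/8), (1/((i:ℝ)+1)))
      atTop atTop := by
    exact Tendsto.const_mul_atTop (by norm_num) hcomp
  apply tendsto_atTop_mono' atTop ?_ hmul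
  filter_upwards [eventually_ge_atTop 8] with q hq
  exact norm_sq_lower q hq

lemma norm_sq_eq (q : ℕ) : ‖ahat q‖^2 = ∑ i : Fin q, (ahat q i)^2 := by
  rw [EuclideanSpace.norm_eq, Real.sq_sqrt (by positivity)]
  simp [Real.norm_eq_abs, sq_abs]

lemma part1 (f : BoundedContinuousFunction ℝ ℝ) :
    Tendsto (fun q : ℕ => (∑ i : Fin q, f (Real.sqrt q * ahat q i / ‖ahat q‖)) / q) atTop
      (nhds (f 0)) := by
  rw [Metric.tendsto_atTop]
  intro η hη
  set M := ‖f‖ with hM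
  have hM0 : 0 ≤ M := norm_nonneg f
  obtain ⟨ε, hε, hball⟩ :=
    Metric.continuousAt_iff.mp (f.continuous.continuousAt (x := 0)) (η/3) (by linarith)
  set R : ℝ := (80*(M+1)/(ε*η))^2 + 1 with hR
  obtain ⟨N, hN⟩ := eventually_atTop.mp (T_tendsto.eventually_ge_atTop R)
  refine ⟨N, fun q hq => ?_⟩
  set S := ∑ i : Fin q, (ahat q i)^2 with hS
  have hTR : R ≤ (q:ℝ) * S := hN q hq
  have hRpos : 0 < R := by positivity
  have hT0 : 0 < (q:ℝ) * S := lt_of_lt_of_le hRpos hTR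
  have hq0 : 0 < (q:ℝ) := by
    have hqne : q ≠ 0 := by rintro rfl; simp [hS] at hT0
    exact_mod_cast Nat.pos_of_ne_zero hqne
  have hS0 : 0 < S := by
    by_contra h
    push_neg at h
    nlinarith
  have hnorm : 0 < ‖ahat q‖ := by
    have h1 := norm_sq_eq q
    nlinarith [norm_nonneg (ahat q)]
  set x : Fin q → ℝ := fun i => Real.sqrt q * ahat q i / ‖ahat q‖ with hx
  set Bad := Finset.univ.filter (fun i : Fin q => ε ≤ |x i|) with hBadDef
  have hsqq : (0:ℝ) < Real.sqrt q := Real.sqrt_pos.mpr hq0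
  -- pointwise lower bound on bad coordinates
  have hP : ∀ i ∈ Bad, ε * ‖ahat q‖ / Real.sqrt q ≤ |ahat q i| := by
    intro i hi
    have hxi : ε ≤ |x i| := (Finset.mem_filter.mp hi).2
    have hxabs : |x i| = Real.sqrt q * |ahat q i| / ‖ahat q‖ := by
      rw [hx]
      rw [abs_div, abs_mul, abs_of_nonneg (Real.sqrt_nonneg _),
        abs_of_nonneg (norm_nonneg _)]
    rw [div_le_iff₀ hsqq]
    have h2 : ε * ‖ahat q‖ ≤ |x i| * ‖ahat q‖ :=
      mul_le_mul_of_nonneg_right hxi (norm_nonneg _)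
    rw [hxabs, div_mul_cancel₀ _ (ne_of_gt hnorm)] at h2
    linarith
  have hcard : (Bad.card : ℝ) * (ε * ‖ahat q‖ / Real.sqrt q) ≤ 20 := by
    have h1 := Finset.card_nsmul_le_sum Bad (fun i => |ahat q i|)
      (ε * ‖ahat q‖ / Real.sqrt q) hP
    rw [nsmul_eq_mul] at h1
    calc (Bad.card : ℝ) * (ε * ‖ahat q‖ / Real.sqrt q)
        ≤ ∑ i ∈ Bad, |ahat q i| := h1
      _ ≤ ∑ i : Fin q, |ahat q i| :=
          Finset.sum_le_sum_of_subset_of_nonneg (Finset.filter_subset _ _)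
            (fun i _ _ => abs_nonneg _)
      _ ≤ 20 := ahat_l1 q
  set B := (Bad.card : ℝ) with hB
  have hB0 : 0 ≤ B := Nat.cast_nonneg _
  set s := Real.sqrt q with hs
  set n := ‖ahat q‖ with hn
  have hc2 : B * (ε * n) ≤ 20 * s := by
    rw [← mul_div_assoc, div_le_iff₀ hsqq] at hcard
    linarith [hcard]
  have hss : s * s = (q:ℝ) := Real.mul_self_sqrt hq0.le
  have hSn2 : S = n^2 := (norm_sq_eq q).symm
  have hsn : Real.sqrt ((q:ℝ) * S) = s * n := by
    rw [hSn2, Real.sqrt_mul hq0.le, Real.sqrt_sq hnorm.le]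
  have hsnR : 80*(M+1)/(ε*η) ≤ s * n := by
    have h1 : (80*(M+1)/(ε*η))^2 ≤ (q:ℝ) * S := by
      rw [hR] at hTR; linarith
    calc 80*(M+1)/(ε*η) = Real.sqrt ((80*(M+1)/(ε*η))^2) :=
          (Real.sqrt_sq (by positivity)).symm
      _ ≤ Real.sqrt ((q:ℝ) * S) := Real.sqrt_le_sqrt h1
      _ = s * n := hsn
  have hεn : 0 < ε * n := mul_pos hε hnorm
  have hBle : B ≤ 20 * s / (ε * n) := by
    rw [le_div_iff₀ hεn]; linarith
  have hbadq : B * (2*M) / (q:ℝ) < η/2 := by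
    have hsn0 : 0 < s * n := mul_pos hsqq hnorm
    have hd0 : (0:ℝ) < 80*(M+1)/(ε*η) := by positivity
    calc B * (2*M) / (q:ℝ) ≤ (20*s/(ε*n)) * (2*M) / (q:ℝ) := by gcongr
      _ = 40*M/(ε*(s*n)) := by
          rw [← hss]
          field_simp
          ring
      _ ≤ 40*M/(ε*(80*(M+1)/(ε*η))) := by
          gcongr <;> first | exact hsnR | positivity
      _ = M*η/(2*(M+1)) := by field_simp; ring
      _ < η/2 := by
          rw [div_lt_div_iff₀ (by positivity) (by norm_num)]
          nlinarith
  -- the main estimate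
  have e1 : (∑ i : Fin q, f (x i)) / q - f 0 = (∑ i : Fin q, (f (x i) - f 0)) / q := by
    rw [Finset.sum_sub_distrib, Finset.sum_const, Finset.card_univ, Fintype.card_fin]
    field_simp
    rw [nsmul_eq_mul]
  have e2 : |∑ i : Fin q, (f (x i) - f 0)|
      ≤ ∑ i : Fin q, ((if ε ≤ |x i| then 2*M else 0) + η/3) := by
    refine le_trans (Finset.abs_sum_le_sum_abs _ _) (Finset.sum_le_sum ?_)
    intro i _
    by_cases hb : ε ≤ |x i|
    · rw [if_pos hb]
      have hd := f.dist_le_two_norm (x i) 0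
      rw [Real.dist_eq] at hd
      linarith
    · rw [if_neg hb]
      push_neg at hb
      have hdx : dist (x i) 0 < ε := by rw [Real.dist_eq, sub_zero]; exact hb
      have hd := hball hdx
      rw [Real.dist_eq] at hd
      linarith
  have e3 : ∑ i : Fin q, ((if ε ≤ |x i| then 2*M else 0) + η/3)
      = B * (2*M) + (q:ℝ) * (η/3) := by
    rw [Finset.sum_add_distrib, Finset.sum_const, Finset.card_univ, Fintype.card_fin,
      nsmul_eq_mul]
    congr 1
    rw [← Finset.sum_filter]
    rw [Finset.sum_const, nsmul_eq_mul]
  rw [Real.dist_eq, e1, abs_div, abs_of_pos hq0]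
  calc |∑ i : Fin q, (f (x i) - f 0)| / (q:ℝ)
      ≤ (B * (2*M) + (q:ℝ) * (η/3)) / (q:ℝ) := by
        gcongr
        exact e2.trans (le_of_eq e3)
    _ = B * (2*M) / (q:ℝ) + η/3 := by
        rw [add_div, mul_div_assoc]
        rw [mul_div_cancel_left₀ _ (ne_of_gt hq0)]
    _ < η/2 + η/3 := by linarith
    _ < η := by linarith

noncomputable def fbump : BoundedContinuousFunction ℝ ℝ where
  toFun := fun x => 1/(1+x^2)
  continuous_toFun := by
    apply Continuous.div continuous_const (by continuity)
    intro x; positivity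
  map_bounded' := by
    refine ⟨2, fun x y => ?_⟩
    have hx : (0:ℝ) < 1 + x^2 := by positivity
    have hy : (0:ℝ) < 1 + y^2 := by positivity
    have h1 : 1/(1+x^2) ≤ 1 := by rw [div_le_one hx]; nlinarith [sq_nonneg x]
    have h2 : 1/(1+y^2) ≤ 1 := by rw [div_le_one hy]; nlinarith [sq_nonneg y]
    have h3 : (0:ℝ) ≤ 1/(1+x^2) := by positivity
    have h4 : (0:ℝ) ≤ 1/(1+y^2) := by positivity
    rw [Real.dist_eq, abs_sub_le_iff]
    constructor <;> linarith

lemma fbump_apply (x : ℝ) : fbump x = 1/(1+x^2) := rfl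

noncomputable def gauss : ℝ → ℝ := fun x => Real.exp (-x ^ 2 / 2) / Real.sqrt (2 * Real.pi)

lemma gauss_eq : gauss = fun x => Real.exp (-(1/2) * x ^ 2) / Real.sqrt (2 * Real.pi) := by
  funext x
  unfold gauss
  norm_num [neg_div]
  ring_nf

lemma gauss_integrable : Integrable gauss := by
  rw [gauss_eq]
  exact (integrable_exp_neg_mul_sq (by norm_num : (0:ℝ) < 1/2)).div_const _

lemma gauss_pos (x : ℝ) : 0 < gauss x := by
  unfold gauss
  have hpi := Real.pi_pos
  have h : (0:ℝ) < Real.sqrt (2 * Real.pi) :=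
    Real.sqrt_pos.mpr (by linarith)
  exact div_pos (Real.exp_pos _) h

lemma gauss_integral : ∫ x : ℝ, gauss x = 1 := by
  rw [gauss_eq]
  have h1 : ∫ x : ℝ, Real.exp (-(1/2) * x ^ 2) = Real.sqrt (Real.pi / (1/2)) :=
    integral_gaussian (1/2)
  have h2 : Real.pi / (1/2 : ℝ) = 2 * Real.pi := by ring
  have hpi := Real.pi_pos
  have h3 : (0:ℝ) < Real.sqrt (2 * Real.pi) := Real.sqrt_pos.mpr (by linarith)
  rw [integral_div, h1, h2]
  exact div_self (ne_of_gt h3)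

lemma fg_integrable : Integrable (fun x => fbump x * gauss x) := by
  apply gauss_integrable.bdd_mul (c := 1)
  · exact (map_continuous fbump).aestronglyMeasurable
  · refine Filter.Eventually.of_forall (fun x => ?_)
    rw [fbump_apply, Real.norm_eq_abs, abs_of_nonneg (by positivity)]
    rw [div_le_one (by positivity)]
    nlinarith [sq_nonneg x]

lemma fg_lt : ∫ x : ℝ, fbump x * gauss x < 1 := by
  have hdiffint : Integrable (fun x => gauss x - fbump x * gauss x) :=
    gauss_integrable.sub fg_integrable
  have hnn : ∀ x, 0 ≤ gauss x - fbump x * gauss x := by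
    intro x
    have h1 : fbump x ≤ 1 := by
      rw [fbump_apply, div_le_one (by positivity)]
      nlinarith [sq_nonneg x]
    nlinarith [gauss_pos x, h1]
  have hpos : 0 < ∫ x : ℝ, (gauss x - fbump x * gauss x) := by
    rw [integral_pos_iff_support_of_nonneg hnn hdiffint]
    have hsub : Set.Ioi (0:ℝ) ⊆ Function.support (fun x => gauss x - fbump x * gauss x) := by
      intro x hx
      have hx0 : (0:ℝ) < x := hx
      have h1 : fbump x < 1 := by
        rw [fbump_apply, div_lt_one (by positivity)]
        nlinarith
      have : 0 < gauss x - fbump x * gauss x := by nlinarith [gauss_pos x]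
      exact ne_of_gt this
    calc (0:ENNReal) < ⊤ := by norm_num
      _ = volume (Set.Ioi (0:ℝ)) := Real.volume_Ioi.symm
      _ ≤ volume (Function.support fun x => gauss x - fbump x * gauss x) :=
          measure_mono hsub
  have hsub := integral_sub gauss_integrable fg_integrable
  rw [hsub] at hpos
  rw [gauss_integral] at hpos
  linarith

/-- Proposition 4.7: the law of `√q â^q_{K_q}/‖â^q‖` (`K_q` uniform on `{1,…,q}`) converges
weakly to the point mass at `0`, and in particular does not converge weakly to `N(0,1)`; so the
maximal configurations are not asymptotically permutation-uniform. -/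
theorem stmt13 :
    (∀ f : BoundedContinuousFunction ℝ ℝ,
      Tendsto (fun q : ℕ => (∑ i : Fin q, f (Real.sqrt q * ahat q i / ‖ahat q‖)) / q) atTop
        (nhds (f 0))) ∧
    ¬ (∀ f : BoundedContinuousFunction ℝ ℝ,
      Tendsto (fun q : ℕ => (∑ i : Fin q, f (Real.sqrt q * ahat q i / ‖ahat q‖)) / q) atTop
        (nhds (∫ x : ℝ, f x * (Real.exp (-x ^ 2 / 2) / Real.sqrt (2 * Real.pi))))) := by
  refine ⟨part1, ?_⟩
  intro H2
  have h1 := part1 fbump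
  have h2 := H2 fbump
  have heq : fbump 0
      = ∫ x : ℝ, fbump x * (Real.exp (-x ^ 2 / 2) / Real.sqrt (2 * Real.pi)) :=
    tendsto_nhds_unique h1 h2
  have hf0 : fbump 0 = 1 := by rw [fbump_apply]; norm_num
  have hlt := fg_lt
  unfold gauss at hlt
  rw [hf0] at heq
  rw [← heq] at hlt
  exact lt_irrefl _ hlt
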